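/- Let Φ : ℝ² → ℝ² be an invertible affine (degree-one) map and let β^{(2n)} have a representing measure μ. Then the pushforward measure μ∘Φ⁻¹ is a representing measure for β̃^{(2n)} where β̃_{ij} = L_β(φ₂ⁱφ₁ʲ), and it has the same cardinality of support; moreover Φ(supp μ) = supp(μ∘Φ⁻¹). -/

import Mathlib

open MeasureTheory Matrix

/-- Index set for the moment matrix `M(n)`: monomials `yⁱxʲ` with `i + j ≤ n`,
encoded as pairs `(i, j)`. -/
abbrev MIdx (n : ℕ) := {v : Fin (n + 1) × Fin (n + 1) // (v.1 : ℕ) + (v.2 : ℕ) ≤ n}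

/-- The moment matrix `M(n)(β)`: entry in row `yⁱxʲ`, column `yᵏxˡ` is `β_{i+k, j+l}`. -/
def momentMat (n : ℕ) (β : ℕ → ℕ → ℝ) : Matrix (MIdx n) (MIdx n) ℝ :=
  Matrix.of fun u v => β ((u.1.1 : ℕ) + (v.1.1 : ℕ)) ((u.1.2 : ℕ) + (v.1.2 : ℕ))

/-- The coefficient vector `p̂` of a two-variable polynomial (convention: `X 0 = x`,
`X 1 = y`; the coordinate of `p̂` at `(i, j)` is the coefficient of `yⁱxʲ`). -/
noncomputable def coeffVec (n : ℕ) (p : MvPolynomial (Fin 2) ℝ) : MIdx n → ℝ :=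
  fun v => MvPolynomial.coeff
    (Finsupp.single (0 : Fin 2) ((v.1.2 : ℕ)) + Finsupp.single (1 : Fin 2) ((v.1.1 : ℕ))) p

/-- `M(n)` is recursively generated: if `p, q, pq` have degree at most `n` and
`p(X,Y) = 0` in the column space, then `(pq)(X,Y) = 0`. -/
def RecursivelyGenerated (n : ℕ) (M : Matrix (MIdx n) (MIdx n) ℝ) : Prop :=
  ∀ p q : MvPolynomial (Fin 2) ℝ, p.totalDegree ≤ n → q.totalDegree ≤ n →
    (p * q).totalDegree ≤ n → M.mulVec (coeffVec n p) = 0 →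
      M.mulVec (coeffVec n (p * q)) = 0

/-- The variety `V(M(n))`: common zero set of all polynomials of degree ≤ n whose
coefficient vector is annihilated by `M(n)`. -/
def varietyOf (n : ℕ) (M : Matrix (MIdx n) (MIdx n) ℝ) : Set (ℝ × ℝ) :=
  {w | ∀ p : MvPolynomial (Fin 2) ℝ, p.totalDegree ≤ n →
    M.mulVec (coeffVec n p) = 0 → MvPolynomial.eval ![w.1, w.2] p = 0}

/-- The Riesz functional `L_β` of a truncated moment sequence. -/
def riesz (β : ℕ → ℕ → ℝ) (p : MvPolynomial (Fin 2) ℝ) : ℝ :=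
  ∑ v ∈ p.support, p.coeff v * β (v 1) (v 0)

/-- The (closed) support of a Borel measure on `ℝ²`: points all of whose open
neighborhoods have positive measure. -/
def msupport (μ : Measure (ℝ × ℝ)) : Set (ℝ × ℝ) :=
  {w | ∀ U : Set (ℝ × ℝ), IsOpen U → w ∈ U → μ U ≠ 0}

/-- `μ` is a representing measure for `β^{(2n)}`. -/
def IsRepMeasure (n : ℕ) (β : ℕ → ℕ → ℝ) (μ : Measure (ℝ × ℝ)) : Prop :=
  ∀ i j : ℕ, i + j ≤ 2 * n →
    Integrable (fun w : ℝ × ℝ => w.2 ^ i * w.1 ^ j) μ ∧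
      β i j = ∫ w : ℝ × ℝ, w.2 ^ i * w.1 ^ j ∂μ


/-- The degree-one polynomial `a + b·x + c·y` (with `X 0 = x`, `X 1 = y`). -/
noncomputable def degOnePoly (a b c : ℝ) : MvPolynomial (Fin 2) ℝ :=
  MvPolynomial.C a + MvPolynomial.C b * MvPolynomial.X 0 + MvPolynomial.C c * MvPolynomial.X 1

lemma eval_as_sum (p : MvPolynomial (Fin 2) ℝ) (w : ℝ × ℝ) :
    MvPolynomial.eval ![w.1, w.2] p
      = ∑ v ∈ p.support, p.coeff v * (w.2 ^ (v 1) * w.1 ^ (v 0)) := by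
  rw [MvPolynomial.eval_eq']
  refine Finset.sum_congr rfl fun v _ => ?_
  rw [Fin.prod_univ_two]
  simp [mul_comm]

lemma lemA (n : ℕ) (β : ℕ → ℕ → ℝ) (μ : Measure (ℝ × ℝ)) (hrep : IsRepMeasure n β μ)
    (p : MvPolynomial (Fin 2) ℝ) (hp : p.totalDegree ≤ 2 * n) :
    Integrable (fun w : ℝ × ℝ => MvPolynomial.eval ![w.1, w.2] p) μ ∧
    ∫ w : ℝ × ℝ, MvPolynomial.eval ![w.1, w.2] p ∂μ = riesz β p := by
  have hdeg : ∀ v ∈ p.support, (v 1) + (v 0) ≤ 2 * n := by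
    intro v hv
    have h1 := MvPolynomial.le_totalDegree hv
    have h2 : (v.sum fun _ e => e) = v 0 + v 1 := by
      rw [Finsupp.sum_fintype _ _ (fun _ => rfl), Fin.sum_univ_two]
    omega
  have heq : (fun w : ℝ × ℝ => MvPolynomial.eval ![w.1, w.2] p)
      = fun w => ∑ v ∈ p.support, p.coeff v * (w.2 ^ (v 1) * w.1 ^ (v 0)) := by
    funext w; exact eval_as_sum p w
  constructor
  · rw [heq]
    exact integrable_finset_sum _ fun v hv => ((hrep _ _ (hdeg v hv)).1.const_mul _)
  · rw [heq, integral_finset_sum _ fun v hv => ((hrep _ _ (hdeg v hv)).1.const_mul _)]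
    refine Finset.sum_congr rfl fun v hv => ?_
    rw [MeasureTheory.integral_const_mul, ← (hrep _ _ (hdeg v hv)).2]

lemma degOnePoly_totalDegree_le (a b c : ℝ) : (degOnePoly a b c).totalDegree ≤ 1 := by
  unfold degOnePoly
  refine (MvPolynomial.totalDegree_add _ _).trans (max_le ((MvPolynomial.totalDegree_add _ _).trans (max_le ?_ ?_)) ?_)
  · simp [MvPolynomial.totalDegree_C]
  · exact (MvPolynomial.totalDegree_mul _ _).trans
      (by simp [MvPolynomial.totalDegree_C, MvPolynomial.totalDegree_X])
  · exact (MvPolynomial.totalDegree_mul _ _).trans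
      (by simp [MvPolynomial.totalDegree_C, MvPolynomial.totalDegree_X])


/-- Pushforward under an invertible degree-one map: if `μ` represents `β^{(2n)}`
and `Φ(x,y) = (a₁+b₁x+c₁y, a₂+b₂x+c₂y)` with `b₁c₂ ≠ b₂c₁`, then `μ∘Φ⁻¹` is a
representing measure for `β̃`, where `β̃_{ij} = L_β(φ₂ⁱφ₁ʲ)`; moreover
`Φ(supp μ) = supp (μ∘Φ⁻¹)` and the supports have the same cardinality. -/
theorem pushforward_repMeasure_degreeOne (n : ℕ) (β : ℕ → ℕ → ℝ)
    (μ : Measure (ℝ × ℝ)) (hrep : IsRepMeasure n β μ)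
    (a₁ b₁ c₁ a₂ b₂ c₂ : ℝ) (hΦ : b₁ * c₂ ≠ b₂ * c₁) :
    IsRepMeasure n
        (fun i j => riesz β (degOnePoly a₂ b₂ c₂ ^ i * degOnePoly a₁ b₁ c₁ ^ j))
        (Measure.map
          (fun w : ℝ × ℝ => (a₁ + b₁ * w.1 + c₁ * w.2, a₂ + b₂ * w.1 + c₂ * w.2)) μ) ∧
      (fun w : ℝ × ℝ => (a₁ + b₁ * w.1 + c₁ * w.2, a₂ + b₂ * w.1 + c₂ * w.2)) ''
          msupport μ =
        msupport (Measure.map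
          (fun w : ℝ × ℝ => (a₁ + b₁ * w.1 + c₁ * w.2, a₂ + b₂ * w.1 + c₂ * w.2)) μ) ∧
      Cardinal.mk (msupport μ) =
        Cardinal.mk (msupport (Measure.map
          (fun w : ℝ × ℝ => (a₁ + b₁ * w.1 + c₁ * w.2, a₂ + b₂ * w.1 + c₂ * w.2)) μ)) := by
  have hD0 : b₁ * c₂ - b₂ * c₁ ≠ 0 := sub_ne_zero.mpr hΦ
  set Φ : ℝ × ℝ → ℝ × ℝ :=
    fun w => (a₁ + b₁ * w.1 + c₁ * w.2, a₂ + b₂ * w.1 + c₂ * w.2) with hΦdef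
  set Ψ : ℝ × ℝ → ℝ × ℝ := fun w =>
    ((c₂ * (w.1 - a₁) - c₁ * (w.2 - a₂)) / (b₁ * c₂ - b₂ * c₁),
     (b₁ * (w.2 - a₂) - b₂ * (w.1 - a₁)) / (b₁ * c₂ - b₂ * c₁)) with hΨdef
  have hΨΦ : ∀ w, Ψ (Φ w) = w := by
    rintro ⟨x, y⟩
    simp only [hΦdef, hΨdef]
    refine Prod.ext ?_ ?_ <;> dsimp only <;> field_simp [show c₂ * b₁ - c₁ * b₂ ≠ 0 by contrapose! hD0; linarith, show b₁ * c₂ - c₁ * b₂ ≠ 0 by contrapose! hD0; linarith, show c₂ * b₁ - b₂ * c₁ ≠ 0 by contrapose! hD0; linarith] <;> ring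
  have hΦΨ : ∀ w, Φ (Ψ w) = w := by
    rintro ⟨u, v⟩
    simp only [hΦdef, hΨdef]
    refine Prod.ext ?_ ?_ <;> dsimp only <;> field_simp [show c₂ * b₁ - c₁ * b₂ ≠ 0 by contrapose! hD0; linarith, show b₁ * c₂ - c₁ * b₂ ≠ 0 by contrapose! hD0; linarith, show c₂ * b₁ - b₂ * c₁ ≠ 0 by contrapose! hD0; linarith] <;> ring
  have hΦc : Continuous Φ := by fun_prop
  have hΨc : Continuous Ψ := by fun_prop
  have hΦm : Measurable Φ := hΦc.measurable
  have hinj : Function.Injective Φ := Function.LeftInverse.injective hΨΦ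
  have himg : ∀ V : Set (ℝ × ℝ), Φ '' V = Ψ ⁻¹' V := by
    intro V
    exact congrFun (Set.image_eq_preimage_of_inverse hΨΦ hΦΨ) V
  have hsupp : Φ '' msupport μ = msupport (Measure.map Φ μ) := by
    ext z
    constructor
    · rintro ⟨w, hw, rfl⟩ U hU hzU
      rw [Measure.map_apply hΦm hU.measurableSet]
      exact hw _ (hU.preimage hΦc) hzU
    · intro hz
      refine ⟨Ψ z, ?_, hΦΨ z⟩
      intro V hV hwV
      have hopen : IsOpen (Φ '' V) := by rw [himg]; exact hV.preimage hΨc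
      have hz2 := hz _ hopen ⟨Ψ z, hwV, hΦΨ z⟩
      rw [Measure.map_apply hΦm hopen.measurableSet,
        Set.preimage_image_eq V hinj] at hz2
      exact hz2
  refine ⟨?_, hsupp, by rw [← hsupp]; exact (Cardinal.mk_image_eq hinj).symm⟩
  intro i j hij
  set p : MvPolynomial (Fin 2) ℝ := degOnePoly a₂ b₂ c₂ ^ i * degOnePoly a₁ b₁ c₁ ^ j with hpdef
  have hpd : p.totalDegree ≤ 2 * n := by
    refine (MvPolynomial.totalDegree_mul _ _).trans ?_
    have h2 := (MvPolynomial.totalDegree_pow _ i).trans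
      (Nat.mul_le_mul_left i (degOnePoly_totalDegree_le a₂ b₂ c₂))
    have h3 := (MvPolynomial.totalDegree_pow _ j).trans
      (Nat.mul_le_mul_left j (degOnePoly_totalDegree_le a₁ b₁ c₁))
    omega
  have hev : ∀ w : ℝ × ℝ, MvPolynomial.eval ![w.1, w.2] p = (Φ w).2 ^ i * (Φ w).1 ^ j := by
    intro w
    simp [hpdef, degOnePoly, hΦdef]
  have hfm : AEStronglyMeasurable (fun w : ℝ × ℝ => w.2 ^ i * w.1 ^ j) (Measure.map Φ μ) :=
    (Continuous.aestronglyMeasurable (by fun_prop))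
  constructor
  · rw [integrable_map_measure hfm hΦm.aemeasurable]
    exact (lemA n β μ hrep p hpd).1.congr (Filter.Eventually.of_forall fun w => hev w)
  · rw [integral_map hΦm.aemeasurable hfm]
    show riesz β p = _
    rw [← (lemA n β μ hrep p hpd).2]
    exact integral_congr_ae (Filter.Eventually.of_forall fun w => hev w)
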